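/- The collection E := {E(W) : W ⊆ 𝒫(T)} is closed under arbitrary intersections and arbitrary unions of nonempty families: for any nonempty family (W_i)_{i ∈ I} of subsets of 𝒫(T), ⋂_{i ∈ I} E(W_i) = E(⋃_{i ∈ I} W_i) ∈ E and ⋃_{i ∈ I} E(W_i) ∈ E; moreover ∅ = E({∅}) ∈ E and 𝔻 = E(∅) ∈ E. Consequently (E, ⊆) is a complete lattice of sets with union as join, intersection as meet, bottom ∅ and top 𝔻. Similarly, if I is finite and each W_i is a finite subset of 𝒫(T), then both ⋂_{i ∈ I} E(W_i) and ⋃_{i ∈ I} E(W_i) belong to E_fin := {E(W) : W a finite subset of 𝒫(T)}, so (E_fin, ⊆) is a bounded distributive lattice with bottom ∅ and top 𝔻. -/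
import Mathlib


universe u

variable {T : Type u}

/-- `cl` is a closure operator on subsets of `T`. -/
def IsClosure (cl : Set T → Set T) : Prop :=
  (∀ A : Set T, A ⊆ cl A) ∧
  (∀ A B : Set T, A ⊆ B → cl A ⊆ cl B) ∧
  (∀ A : Set T, cl (cl A) = cl A)

/-- `cl` is finitary: the closure of a set is the union of the closures of its
finite subsets. -/
def IsFinitary (cl : Set T → Set T) : Prop :=
  ∀ A : Set T, cl A = ⋃ F ∈ {F : Set T | F.Finite ∧ F ⊆ A}, cl F

/-- A coherent set of desirable things (SDT): closed and avoiding the forbidden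
things `Tneg`. -/
def CohSDT (cl : Set T → Set T) (Tneg : Set T) (D : Set T) : Prop :=
  cl D = D ∧ D ∩ Tneg = ∅

/-- Selection maps of a collection `W` of sets of things: maps choosing an
element of each member of `W`. -/
def Sel (W : Set (Set T)) : Type u :=
  {σ : Set T → T // ∀ A ∈ W, σ A ∈ A}

/-- A coherent set of desirable sets of things (SDS): axioms K1–K5. -/
def CohSDS (cl : Set T → Set T) (Tneg : Set T) (K : Set (Set T)) : Prop :=
  (∅ : Set T) ∉ K ∧
  (∀ A₁ ∈ K, ∀ A₂ : Set T, A₁ ⊆ A₂ → A₂ ∈ K) ∧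
  (∀ A ∈ K, A \ Tneg ∈ K) ∧
  (∀ t ∈ cl (∅ : Set T), ({t} : Set T) ∈ K) ∧
  (∀ W ⊆ K, W.Nonempty →
    ∀ f : Sel W → T, (∀ σ : Sel W, f σ ∈ cl (σ.1 '' W)) → Set.range f ∈ K)

/-- A finitely coherent SDS: axioms K1–K4 together with K5 restricted to
nonempty finite subcollections. -/
def FinCohSDS (cl : Set T → Set T) (Tneg : Set T) (K : Set (Set T)) : Prop :=
  (∅ : Set T) ∉ K ∧
  (∀ A₁ ∈ K, ∀ A₂ : Set T, A₁ ⊆ A₂ → A₂ ∈ K) ∧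
  (∀ A ∈ K, A \ Tneg ∈ K) ∧
  (∀ t ∈ cl (∅ : Set T), ({t} : Set T) ∈ K) ∧
  (∀ W ⊆ K, W.Finite → W.Nonempty →
    ∀ f : Sel W → T, (∀ σ : Sel W, f σ ∈ cl (σ.1 '' W)) → Set.range f ∈ K)

/-- A finitely coherent set of desirable finite sets of things (SDFS):
axioms F1–F5. -/
def FinCohSDFS (cl : Set T → Set T) (Tneg : Set T) (K : Set (Set T)) : Prop :=
  (∀ F ∈ K, F.Finite) ∧
  (∅ : Set T) ∉ K ∧
  (∀ F₁ ∈ K, ∀ F₂ : Set T, F₂.Finite → F₁ ⊆ F₂ → F₂ ∈ K) ∧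
  (∀ F ∈ K, F \ Tneg ∈ K) ∧
  (∀ t ∈ cl (∅ : Set T), ({t} : Set T) ∈ K) ∧
  (∀ W ⊆ K, W.Finite → W.Nonempty →
    ∀ f : Sel W → T, (∀ σ : Sel W, f σ ∈ cl (σ.1 '' W)) → Set.range f ∈ K)

/-- The set of things whose singletons belong to `K`. -/
def sdt (K : Set (Set T)) : Set T := {t | ({t} : Set T) ∈ K}

/-- The SDS of all sets of things meeting `D`. -/
def sds (D : Set T) : Set (Set T) := {A | (A ∩ D).Nonempty}

/-- The SDFS of all finite sets of things meeting `D`. -/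
def sdfs (D : Set T) : Set (Set T) := {F | F.Finite ∧ (F ∩ D).Nonempty}

/-- The event `𝒟_A` of all coherent SDTs meeting `A`. -/
def evA (cl : Set T → Set T) (Tneg : Set T) (A : Set T) : Set (Set T) :=
  {D | CohSDT cl Tneg D ∧ (A ∩ D).Nonempty}

/-- The event `E(W)` of all coherent SDTs meeting every member of `W`
(with `E(∅)` equal to the set of all coherent SDTs). -/
def ev (cl : Set T → Set T) (Tneg : Set T) (W : Set (Set T)) : Set (Set T) :=
  {D | CohSDT cl Tneg D ∧ ∀ A ∈ W, (A ∩ D).Nonempty}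

/-- An SDS is conjunctive if every desirable set contains a desirable
singleton. -/
def Conjunctive (K : Set (Set T)) : Prop :=
  ∀ A ∈ K, ∃ t ∈ A, ({t} : Set T) ∈ K

/-- Completeness of an SDS. -/
def CompleteSDS (K : Set (Set T)) : Prop :=
  ∀ A₁ A₂ : Set T, A₁ ∪ A₂ ∈ K → A₁ ∈ K ∨ A₂ ∈ K

/-- The finitary part `K^f` of an SDS. -/
def finPart (K : Set (Set T)) : Set (Set T) :=
  {A | ∃ B ∈ K, B.Finite ∧ B ⊆ A}

/-- An SDS is finitary if every desirable set has a finite desirable subset. -/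
def FinitarySDS (K : Set (Set T)) : Prop :=
  ∀ A ∈ K, ∃ B, B.Finite ∧ B ⊆ A ∧ B ∈ K

/-- The lattice of events `E`. -/
def Ecal (cl : Set T → Set T) (Tneg : Set T) : Set (Set (Set T)) :=
  {E | ∃ W : Set (Set T), E = ev cl Tneg W}

/-- The lattice of finitary events `E_fin`. -/
def Efin (cl : Set T → Set T) (Tneg : Set T) : Set (Set (Set T)) :=
  {E | ∃ W : Set (Set T), W.Finite ∧ E = ev cl Tneg W}

/-- A filter on a lattice of events `L` ordered by inclusion. -/
def IsFilterOn (L F : Set (Set (Set T))) : Prop :=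
  F ⊆ L ∧ F.Nonempty ∧
  (∀ E₁ ∈ F, ∀ E₂ ∈ L, E₁ ⊆ E₂ → E₂ ∈ F) ∧
  (∀ E₁ ∈ F, ∀ E₂ ∈ F, E₁ ∩ E₂ ∈ F)

/-- A proper filter on `L`. -/
def IsProperFilterOn (L F : Set (Set (Set T))) : Prop :=
  IsFilterOn L F ∧ F ≠ L

/-- A prime filter on `L`. -/
def IsPrimeFilterOn (L F : Set (Set (Set T))) : Prop :=
  IsProperFilterOn L F ∧
  ∀ E₁ ∈ L, ∀ E₂ ∈ L, E₁ ∪ E₂ ∈ F → E₁ ∈ F ∨ E₂ ∈ F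

/-- A proper principal filter on `L`: the upset of some nonempty `E₀ ∈ L`. -/
def IsProperPrincipalFilterOn (L F : Set (Set (Set T))) : Prop :=
  ∃ E₀ ∈ L, E₀ ≠ (∅ : Set (Set T)) ∧ F = {E' | E' ∈ L ∧ E₀ ⊆ E'}

/-- The map `f̂` sending an SDS to the collection of events of its finite
subcollections. -/
def fhat (cl : Set T → Set T) (Tneg : Set T) (K : Set (Set T)) :
    Set (Set (Set T)) :=
  {E | ∃ W : Set (Set T), W ⊆ K ∧ W.Finite ∧ E = ev cl Tneg W}

/-- The map `f` sending an SDS to the collection of events of all of its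
subcollections. -/
def fprin (cl : Set T → Set T) (Tneg : Set T) (K : Set (Set T)) :
    Set (Set (Set T)) :=
  {E | ∃ W : Set (Set T), W ⊆ K ∧ E = ev cl Tneg W}

/-- The map `d` sending a collection of events to the SDS it determines. -/
def dmap (cl : Set T → Set T) (Tneg : Set T) (F : Set (Set (Set T))) :
    Set (Set T) :=
  {A : Set T | evA cl Tneg A ∈ F}

/-- `K` is finitely consistent: it is included in some finitely coherent SDS. -/
def FinConsistent (cl : Set T → Set T) (Tneg : Set T) (K : Set (Set T)) : Prop :=
  ∃ K' : Set (Set T), FinCohSDS cl Tneg K' ∧ K ⊆ K'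

/-- `K` is consistent: it is included in some coherent SDS. -/
def Consistent (cl : Set T → Set T) (Tneg : Set T) (K : Set (Set T)) : Prop :=
  ∃ K' : Set (Set T), CohSDS cl Tneg K' ∧ K ⊆ K'

/-- The finitary closure operator on SDSes (with value `𝒫(T)` when `K` is not
finitely consistent, via the empty-intersection convention). -/
def clFin (cl : Set T → Set T) (Tneg : Set T) (K : Set (Set T)) : Set (Set T) :=
  ⋂₀ {K' : Set (Set T) | FinCohSDS cl Tneg K' ∧ K ⊆ K'}

/-- The closure operator on SDSes (with value `𝒫(T)` when `K` is not
consistent, via the empty-intersection convention). -/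
def clSDS (cl : Set T → Set T) (Tneg : Set T) (K : Set (Set T)) : Set (Set T) :=
  ⋂₀ {K' : Set (Set T) | CohSDS cl Tneg K' ∧ K ⊆ K'}

lemma ev_iInter {ι : Type u} [Nonempty ι] (cl : Set T → Set T) (Tneg : Set T)
    (Wf : ι → Set (Set T)) :
    (⋂ i, ev cl Tneg (Wf i)) = ev cl Tneg (⋃ i, Wf i) := by
  ext D
  simp only [Set.mem_iInter, ev, Set.mem_setOf_eq, Set.mem_iUnion]
  constructor
  · intro h
    refine ⟨(h (Classical.arbitrary _)).1, ?_⟩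
    rintro A ⟨i, hAi⟩
    exact (h i).2 A hAi
  · intro h i
    exact ⟨h.1, fun A hA => h.2 A ⟨i, hA⟩⟩

lemma ev_iUnion' {ι : Type u} [Nonempty ι] (cl : Set T → Set T) (Tneg : Set T)
    (Wf : ι → Set (Set T)) :
    (⋃ i, ev cl Tneg (Wf i)) =
      ev cl Tneg {A | ∃ σ : ι → Set T, (∀ i, σ i ∈ Wf i) ∧ A = ⋃ i, σ i} := by
  ext D
  simp only [Set.mem_iUnion, ev, Set.mem_setOf_eq]
  constructor
  · rintro ⟨i, hD, hmeet⟩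
    refine ⟨hD, ?_⟩
    rintro A ⟨σ, hσ, rfl⟩
    obtain ⟨t, ht, htD⟩ := hmeet (σ i) (hσ i)
    exact ⟨t, Set.mem_iUnion.2 ⟨i, ht⟩, htD⟩
  · rintro ⟨hD, h⟩
    by_contra hc
    push_neg at hc
    have : ∀ i, ∃ A ∈ Wf i, A ∩ D = ∅ := by
      intro i
      rcases hc i hD with ⟨A, hA, hAD⟩
      exact ⟨A, hA, hAD⟩
    choose σ hσ hσD using this
    obtain ⟨t, ht, htD⟩ := h (⋃ i, σ i) ⟨σ, hσ, rfl⟩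
    obtain ⟨i, hti⟩ := Set.mem_iUnion.1 ht
    exact absurd (Set.mem_inter hti htD) (by simp [hσD i])

/-- The collections of events `E` and `E_fin` are lattices of sets: `E` is
closed under arbitrary nonempty intersections and unions (a completely
distributive complete lattice of sets), with bottom `∅` and top `𝔻`; `E_fin`
is closed under nonempty finite intersections and unions (a bounded
distributive lattice of sets), with the same bottom and top. -/
theorem event_lattices (T : Type u) [Nonempty T]
    (cl : Set T → Set T) (Tneg : Set T)
    (hcl : IsClosure cl) (hsan : cl (∅ : Set T) ∩ Tneg = ∅) :
    (∀ (ι : Type u), Nonempty ι → ∀ Wf : ι → Set (Set T),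
      (⋂ i, ev cl Tneg (Wf i)) = ev cl Tneg (⋃ i, Wf i)) ∧
    (∀ (ι : Type u), Nonempty ι → ∀ Wf : ι → Set (Set T),
      (⋂ i, ev cl Tneg (Wf i)) ∈ Ecal cl Tneg ∧
      (⋃ i, ev cl Tneg (Wf i)) ∈ Ecal cl Tneg) ∧
    ev cl Tneg {(∅ : Set T)} = (∅ : Set (Set T)) ∧
    (∅ : Set (Set T)) ∈ Ecal cl Tneg ∧
    ev cl Tneg (∅ : Set (Set T)) = {D : Set T | CohSDT cl Tneg D} ∧
    {D : Set T | CohSDT cl Tneg D} ∈ Ecal cl Tneg ∧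
    (∀ E ∈ Ecal cl Tneg, E ⊆ {D : Set T | CohSDT cl Tneg D}) ∧
    (∀ (ι : Type u), Nonempty ι → Finite ι → ∀ Wf : ι → Set (Set T),
      (∀ i, (Wf i).Finite) →
      (⋂ i, ev cl Tneg (Wf i)) ∈ Efin cl Tneg ∧
      (⋃ i, ev cl Tneg (Wf i)) ∈ Efin cl Tneg) ∧
    (∅ : Set (Set T)) ∈ Efin cl Tneg ∧
    {D : Set T | CohSDT cl Tneg D} ∈ Efin cl Tneg := by
  refine ⟨?_, ?_, ?_, ?_, ?_, ?_, ?_, ?_, ?_, ?_⟩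
  · intro ι hι Wf
    haveI := hι
    exact ev_iInter cl Tneg Wf
  · intro ι hι Wf
    haveI := hι
    exact ⟨⟨_, ev_iInter cl Tneg Wf⟩, ⟨_, ev_iUnion' cl Tneg Wf⟩⟩
  · ext D
    simp [ev, Set.mem_setOf_eq]
  · refine ⟨{(∅ : Set T)}, ?_⟩
    ext D
    simp [ev, Set.mem_setOf_eq]
  · ext D
    simp [ev]
  · exact ⟨∅, by ext D; simp [ev]⟩
  · rintro E ⟨W, rfl⟩ D hD
    exact hD.1
  · intro ι hι hfin Wf hWfin
    haveI := hι; haveI := hfin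
    constructor
    · refine ⟨⋃ i, Wf i, Set.finite_iUnion hWfin, ev_iInter cl Tneg Wf⟩
    · refine ⟨_, ?_, ev_iUnion' cl Tneg Wf⟩
      have hpi : (Set.pi Set.univ Wf).Finite := Set.Finite.pi (fun i => hWfin i)
      have : {A | ∃ σ : ι → Set T, (∀ i, σ i ∈ Wf i) ∧ A = ⋃ i, σ i} =
          (fun σ : ι → Set T => ⋃ i, σ i) '' (Set.pi Set.univ Wf) := by
        ext A
        simp only [Set.mem_setOf_eq, Set.mem_image, Set.mem_pi, Set.mem_univ,
          forall_true_left]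
        constructor
        · rintro ⟨σ, h1, rfl⟩; exact ⟨σ, h1, rfl⟩
        · rintro ⟨σ, h1, rfl⟩; exact ⟨σ, h1, rfl⟩
      rw [this]
      exact hpi.image _
  · refine ⟨{(∅ : Set T)}, Set.finite_singleton _, ?_⟩
    ext D
    simp [ev, Set.mem_setOf_eq]
  · exact ⟨∅, Set.finite_empty, by ext D; simp [ev]⟩
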